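/- Let θ ∈ Int(K) and z ∈ ℝ^d, and set t := ‖z − θ‖_{H(θ)}. Let W ∈ ℝ^{m×m} be the diagonal matrix with entries W_ii = (b_i − a_iᵀz)² / (b_i − a_iᵀθ)². Then ‖W − I_m‖_F ≤ t(2 + t). In particular, if t ≤ 1 then the relative change of the squared slacks satisfies Σ_{i=1}^m ((s_i(z)² − s_i(θ)²)/s_i(θ)²)² ≤ 9t², where s_i(w) := b_i − a_iᵀw. -/

import Mathlib

open Matrix Real
open scoped BigOperators

/-- The Hessian of the log-barrier function for the polytope `{x | A x ≤ b}`. -/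
noncomputable def logBarrierHessian {m d : ℕ} (A : Matrix (Fin m) (Fin d) ℝ) (b : Fin m → ℝ)
    (x : Fin d → ℝ) : Matrix (Fin d) (Fin d) ℝ :=
  ∑ i, ((b i - A.mulVec x i) ^ 2)⁻¹ • Matrix.vecMulVec (A i) (A i)

/-- The local norm `‖h‖_M = √(hᵀ M h)`. -/
noncomputable def mnorm {d : ℕ} (M : Matrix (Fin d) (Fin d) ℝ) (h : Fin d → ℝ) : ℝ :=
  Real.sqrt (h ⬝ᵥ M.mulVec h)

/-- The Frobenius norm of a matrix. -/
noncomputable def frobNorm {m n : ℕ} (M : Matrix (Fin m) (Fin n) ℝ) : ℝ :=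
  Real.sqrt (∑ i, ∑ j, (M i j) ^ 2)

lemma vecMulVec_mulVec' {m d : ℕ} (w : Fin m → ℝ) (v h : Fin d → ℝ) :
    (Matrix.vecMulVec w v).mulVec h = (v ⬝ᵥ h) • w := by
  funext j
  simp [Matrix.mulVec, dotProduct, Matrix.vecMulVec_apply, Finset.mul_sum,
    mul_comm, mul_left_comm]

lemma quad_sum {m d : ℕ} (A : Matrix (Fin m) (Fin d) ℝ) (c : Fin m → ℝ) (h : Fin d → ℝ) :
    h ⬝ᵥ (∑ i, c i • Matrix.vecMulVec (A i) (A i)).mulVec h = ∑ i, c i * (A i ⬝ᵥ h)^2 := by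
  induction (Finset.univ : Finset (Fin m)) using Finset.induction with
  | empty => simp
  | @insert i s hx ih =>
      rw [Finset.sum_insert hx, Finset.sum_insert hx, Matrix.add_mulVec,
        dotProduct_add, ih, Matrix.smul_mulVec, vecMulVec_mulVec',
        dotProduct_smul, dotProduct_smul, dotProduct_comm h (A i)]
      simp only [smul_eq_mul, pow_two]

lemma key_ineq {m : ℕ} (u : Fin m → ℝ) :
    Real.sqrt (∑ i, (u i^2 - 2*u i)^2) ≤
      Real.sqrt (∑ i, u i^2) * (2 + Real.sqrt (∑ i, u i^2)) := by
  have hT0 : 0 ≤ ∑ i, u i^2 := Finset.sum_nonneg fun i _ => sq_nonneg _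
  let x : EuclideanSpace ℝ (Fin m) := WithLp.toLp 2 (fun i => u i ^ 2)
  let y : EuclideanSpace ℝ (Fin m) := WithLp.toLp 2 (fun i => -(2 * u i))
  have hnx : ‖x‖ ≤ ∑ i, u i^2 := by
    rw [EuclideanSpace.norm_eq]
    have h1 : ∑ i, ‖x i‖^2 = ∑ i, u i^2 * u i^2 := by
      refine Finset.sum_congr rfl fun i _ => ?_
      show ‖u i ^ 2‖ ^ 2 = _
      rw [Real.norm_eq_abs, sq_abs]; ring
    have h2 : ∑ i, u i^2 * u i^2 ≤ (∑ i, u i^2) * (∑ i, u i^2) := by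
      rw [Finset.sum_mul]
      refine Finset.sum_le_sum fun i _ => ?_
      exact mul_le_mul_of_nonneg_left
        (Finset.single_le_sum (fun j _ => sq_nonneg (u j)) (Finset.mem_univ i)) (sq_nonneg _)
    calc Real.sqrt (∑ i, ‖x i‖^2) ≤ Real.sqrt ((∑ i, u i^2) * (∑ i, u i^2)) :=
          Real.sqrt_le_sqrt (h1 ▸ h2)
      _ = ∑ i, u i^2 := Real.sqrt_mul_self hT0
  have hny : ‖y‖ = 2 * Real.sqrt (∑ i, u i^2) := by
    rw [EuclideanSpace.norm_eq]
    have h1 : ∑ i, ‖y i‖^2 = 2^2 * ∑ i, u i^2 := by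
      rw [Finset.mul_sum]
      refine Finset.sum_congr rfl fun i _ => ?_
      show ‖-(2 * u i)‖ ^ 2 = _
      rw [Real.norm_eq_abs, sq_abs]; ring
    rw [h1, Real.sqrt_mul (by positivity), Real.sqrt_sq (by norm_num)]
  have hxy : Real.sqrt (∑ i, (u i^2 - 2*u i)^2) = ‖x + y‖ := by
    rw [EuclideanSpace.norm_eq]
    congr 1
    refine Finset.sum_congr rfl fun i _ => ?_
    have hi : (x + y) i = u i^2 - 2 * u i := by
      show u i ^ 2 + -(2 * u i) = _; ring
    rw [hi, Real.norm_eq_abs, sq_abs]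
  have htri := norm_add_le x y
  have hsq := Real.mul_self_sqrt hT0
  rw [hxy]
  nlinarith [Real.sqrt_nonneg (∑ i, u i^2)]

/-- With `t := ‖z - θ‖_{H(θ)}` and `W := diag((b_i - a_iᵀz)²/(b_i - a_iᵀθ)²)`,
one has `‖W - I‖_F ≤ t(2+t)`; and if `t ≤ 1` then
`∑ i, ((s_i(z)² - s_i(θ)²)/s_i(θ)²)² ≤ 9 t²`. -/
theorem stmt2 {m d : ℕ} (A : Matrix (Fin m) (Fin d) ℝ) (b : Fin m → ℝ)
    (hbdd : ∃ R : ℝ, ∀ w : Fin d → ℝ, (∀ i, A.mulVec w i ≤ b i) → ∀ j, |w j| ≤ R)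
    (θ z : Fin d → ℝ) (hθ : ∀ i, A.mulVec θ i < b i) :
    frobNorm
        (Matrix.diagonal (fun i => (b i - A.mulVec z i) ^ 2 / (b i - A.mulVec θ i) ^ 2) -
          (1 : Matrix (Fin m) (Fin m) ℝ)) ≤
      mnorm (logBarrierHessian A b θ) (z - θ) * (2 + mnorm (logBarrierHessian A b θ) (z - θ)) ∧
    (mnorm (logBarrierHessian A b θ) (z - θ) ≤ 1 →
      ∑ i, (((b i - A.mulVec z i) ^ 2 - (b i - A.mulVec θ i) ^ 2) / (b i - A.mulVec θ i) ^ 2) ^ 2 ≤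
        9 * mnorm (logBarrierHessian A b θ) (z - θ) ^ 2) := by
  classical
  set h : Fin d → ℝ := z - θ with hh
  have hs : ∀ i, 0 < b i - A.mulVec θ i := fun i => sub_pos.2 (hθ i)
  set u : Fin m → ℝ := fun i => (A i ⬝ᵥ h) / (b i - A.mulVec θ i) with hu
  -- the quadratic form equals ∑ u i ^ 2
  have hq : h ⬝ᵥ (logBarrierHessian A b θ).mulVec h = ∑ i, u i ^ 2 := by
    rw [logBarrierHessian, quad_sum]
    refine Finset.sum_congr rfl fun i _ => ?_
    rw [hu, div_pow, inv_mul_eq_div]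
  have hT0 : 0 ≤ ∑ i, u i ^ 2 := Finset.sum_nonneg fun i _ => sq_nonneg _
  have ht : mnorm (logBarrierHessian A b θ) h = Real.sqrt (∑ i, u i ^ 2) := by
    rw [mnorm, hq]
  -- slack identity
  have hslack : ∀ i, b i - A.mulVec z i = (b i - A.mulVec θ i) - A i ⬝ᵥ h := by
    intro i
    have : A.mulVec h i = A.mulVec z i - A.mulVec θ i := by
      rw [hh, Matrix.mulVec_sub]; rfl
    have h2 : A i ⬝ᵥ h = A.mulVec h i := rfl
    rw [h2, this]; ring
  have hv : ∀ i, (b i - A.mulVec z i) ^ 2 / (b i - A.mulVec θ i) ^ 2 - 1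
      = u i ^ 2 - 2 * u i := by
    intro i
    have hsne : (b i - A.mulVec θ i) ≠ 0 := ne_of_gt (hs i)
    rw [hslack i, hu]
    field_simp
    ring
  have hv2 : ∀ i, ((b i - A.mulVec z i) ^ 2 - (b i - A.mulVec θ i) ^ 2)
      / (b i - A.mulVec θ i) ^ 2 = u i ^ 2 - 2 * u i := by
    intro i
    have hsne : (b i - A.mulVec θ i) ≠ 0 := ne_of_gt (hs i)
    rw [hslack i, hu]
    field_simp
    ring
  -- Frobenius norm computation
  have hfrob : frobNorm
      (Matrix.diagonal (fun i => (b i - A.mulVec z i) ^ 2 / (b i - A.mulVec θ i) ^ 2) -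
        (1 : Matrix (Fin m) (Fin m) ℝ)) = Real.sqrt (∑ i, (u i ^ 2 - 2 * u i) ^ 2) := by
    rw [frobNorm]
    congr 1
    refine Finset.sum_congr rfl fun i _ => ?_
    rw [Finset.sum_eq_single i]
    · simp only [Matrix.sub_apply, Matrix.diagonal_apply_eq, Matrix.one_apply_eq]
      rw [hv i]
    · intro j _ hj
      simp [Matrix.diagonal_apply, Matrix.one_apply, Ne.symm hj,
        (fun hh' => hj hh'.symm : ¬ i = j)]
    · simp
  have hmain : frobNorm
      (Matrix.diagonal (fun i => (b i - A.mulVec z i) ^ 2 / (b i - A.mulVec θ i) ^ 2) -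
        (1 : Matrix (Fin m) (Fin m) ℝ)) ≤
      mnorm (logBarrierHessian A b θ) h * (2 + mnorm (logBarrierHessian A b θ) h) := by
    rw [hfrob, ht]
    exact key_ineq u
  refine ⟨hmain, fun ht1 => ?_⟩
  have ht0 : 0 ≤ mnorm (logBarrierHessian A b θ) h := by rw [ht]; exact Real.sqrt_nonneg _
  have hsum : ∑ i, (((b i - A.mulVec z i) ^ 2 - (b i - A.mulVec θ i) ^ 2)
      / (b i - A.mulVec θ i) ^ 2) ^ 2 = ∑ i, (u i ^ 2 - 2 * u i) ^ 2 := by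
    refine Finset.sum_congr rfl fun i _ => ?_
    rw [hv2 i]
  have hS0 : 0 ≤ ∑ i, (u i ^ 2 - 2 * u i) ^ 2 := Finset.sum_nonneg fun i _ => sq_nonneg _
  have hfr0 : Real.sqrt (∑ i, (u i ^ 2 - 2 * u i) ^ 2) ^ 2
      = ∑ i, (u i ^ 2 - 2 * u i) ^ 2 := Real.sq_sqrt hS0
  have hb := hmain
  rw [hfrob] at hb
  set t := mnorm (logBarrierHessian A b θ) h with htdef
  have hbound : Real.sqrt (∑ i, (u i ^ 2 - 2 * u i) ^ 2) ≤ 3 * t := by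
    calc Real.sqrt (∑ i, (u i ^ 2 - 2 * u i) ^ 2) ≤ t * (2 + t) := hb
      _ ≤ 3 * t := by nlinarith
  have := Real.sqrt_nonneg (∑ i, (u i ^ 2 - 2 * u i) ^ 2)
  rw [hsum, ← hfr0]
  nlinarith
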